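/- (Finite analogue of Ramanujan's Entry 2.) Let N be a positive integer and q ∈ ℂ with |q| < 1. Let a ∈ ℂ with a·q^k ≠ 1 for 1 ≤ k ≤ N. Then (aq;q)_N · ∑_{n=1}^{N} [N choose n]_q · n a^n q^{n^2} / (aq;q)_n = ∑_{n=1}^{N} [N choose n]_q · (q;q)_n (−1)^{n−1} a^n q^{n(n+1)/2} / (1 − q^n). -/

import Mathlib

open Finset

/-- Finite q-Pochhammer symbol `(a;q)_n = ∏_{k=0}^{n-1} (1 - a q^k)`. -/
noncomputable def qPoch (q a : ℂ) (n : ℕ) : ℂ :=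
  ∏ k ∈ Finset.range n, (1 - a * q ^ k)

/-- Infinite q-Pochhammer symbol `(a;q)_∞ = ∏_{k=0}^{∞} (1 - a q^k)`. -/
noncomputable def qPochInf (q a : ℂ) : ℂ :=
  ∏' k : ℕ, (1 - a * q ^ k)

/-- Gaussian (q-binomial) coefficient `[N choose n]_q`. -/
noncomputable def qBinom (q : ℂ) (N n : ℕ) : ℂ :=
  qPoch q q N / (qPoch q q n * qPoch q q (N - n))

/-- triangular numbers -/
def tri : ℕ → ℕ
  | 0 => 0
  | n+1 => tri n + n + 1

lemma tri_two (n : ℕ) : 2 * tri n = n * (n+1) := by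
  induction n with
  | zero => rfl
  | succ n ih =>
    show 2 * (tri n + n + 1) = _
    rw [mul_add, mul_add, ih]; ring

lemma tri_eq (n : ℕ) : tri n = n * (n+1) / 2 := by
  have := tri_two n; omega

lemma tri_add (m j : ℕ) : tri (m + j) = tri j + m * j + tri m := by
  have h1 := tri_two (m+j); have h2 := tri_two j; have h3 := tri_two m
  have : (m+j) * (m+j+1) = j*(j+1) + 2*(m*j) + m*(m+1) := by ring
  omega

lemma tri_sq (n : ℕ) (h : 1 ≤ n) : tri n + tri (n-1) = n^2 := by
  obtain ⟨k, rfl⟩ : ∃ k, n = k+1 := ⟨n-1, by omega⟩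
  simp only [Nat.add_sub_cancel]
  have h1 := tri_two (k+1); have h2 := tri_two k
  have h3 : (k+1)*(k+1+1) + k*(k+1) = 2*((k+1)^2) := by ring
  omega

lemma tri_pred (n : ℕ) : tri n = tri (n-1) + n := by
  cases n with
  | zero => rfl
  | succ n => show tri n + n + 1 = _; simp only [Nat.add_sub_cancel]; omega

section
variable {q : ℂ} (hq : ‖q‖ < 1)

lemma qPoch_succ (b : ℂ) (n : ℕ) : qPoch q b (n+1) = qPoch q b n * (1 - b * q^n) :=
  Finset.prod_range_succ _ n

lemma qPoch_add (b : ℂ) (n m : ℕ) :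
    qPoch q b (n+m) = qPoch q b n * qPoch q (b * q^n) m := by
  unfold qPoch
  rw [Finset.prod_range_add]
  congr 1
  exact Finset.prod_congr rfl fun k _ => by rw [pow_add]; ring

include hq

lemma one_sub_qpow_ne (n : ℕ) (hn : 1 ≤ n) : (1 : ℂ) - q^n ≠ 0 := by
  intro h
  have hq1 : q^n = 1 := by linear_combination -h
  have habs : ‖q^n‖ < 1 := by
    rw [norm_pow]; exact pow_lt_one₀ (norm_nonneg q) hq (by omega)
  rw [hq1] at habs; simp at habs

lemma qq_ne (n : ℕ) : qPoch q q n ≠ 0 := by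
  unfold qPoch
  rw [Finset.prod_ne_zero_iff]
  intro k _
  have : q * q^k = q^(k+1) := (pow_succ' q k).symm
  rw [this]
  exact one_sub_qpow_ne hq (k+1) (by omega)

end

section
variable {q : ℂ} (hq : ‖q‖ < 1)

include hq

lemma qBinom_zero (n : ℕ) : qBinom q n 0 = 1 := by
  unfold qBinom
  rw [Nat.sub_zero]
  have h0 : qPoch q q 0 = 1 := by simp [qPoch]
  rw [h0, one_mul, div_self (qq_ne hq n)]

lemma qBinom_self (n : ℕ) : qBinom q n n = 1 := by
  unfold qBinom
  rw [Nat.sub_self]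
  have h0 : qPoch q q 0 = 1 := by simp [qPoch]
  rw [h0, mul_one, div_self (qq_ne hq n)]

lemma hne1 (i : ℕ) : (1:ℂ) - q * q^i ≠ 0 := by
  have : q * q^i = q^(i+1) := (pow_succ' q i).symm
  rw [this]; exact one_sub_qpow_ne hq (i+1) (by omega)

lemma qBinom_pascal1 (i s : ℕ) :
    qBinom q (i+1+s) i + q^(i+1) * qBinom q (i+1+s) (i+1) = qBinom q (i+1+s+1) (i+1) := by
  have e1 : i+1+s-i = s+1 := by omega
  have e2 : i+1+s-(i+1) = s := by omega
  have e3 : i+1+s+1-(i+1) = s+1 := by omega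
  unfold qBinom
  rw [e1, e2, e3]
  rw [show i+1+s+1 = (i+1+s)+1 from rfl, qPoch_succ, qPoch_succ, qPoch_succ]
  have h1 := qq_ne hq i
  have h2 := qq_ne hq s
  have h3 := qq_ne hq (i+1+s)
  have h4 := hne1 hq i
  have h5 := hne1 hq s
  field_simp
  ring

lemma qBinom_pascal2 (i s : ℕ) :
    qBinom q (i+1+s+1) (i+1) = qBinom q (i+1+s) (i+1) + q^(s+1) * qBinom q (i+1+s) i := by
  have e1 : i+1+s-i = s+1 := by omega
  have e2 : i+1+s-(i+1) = s := by omega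
  have e3 : i+1+s+1-(i+1) = s+1 := by omega
  unfold qBinom
  rw [e1, e2, e3]
  rw [show i+1+s+1 = (i+1+s)+1 from rfl, qPoch_succ, qPoch_succ, qPoch_succ]
  have h1 := qq_ne hq i
  have h2 := qq_ne hq s
  have h3 := qq_ne hq (i+1+s)
  have h4 := hne1 hq i
  have h5 := hne1 hq s
  field_simp
  ring

lemma qBinom_tri (j u v : ℕ) :
    qBinom q (j+u+v) (j+u) * qBinom q (j+u) j = qBinom q (j+u+v) j * qBinom q (u+v) u := by
  have e1 : j+u+v-(j+u) = v := by omega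
  have e2 : j+u-j = u := by omega
  have e3 : j+u+v-j = u+v := by omega
  have e4 : u+v-u = v := by omega
  unfold qBinom
  rw [e1, e2, e3, e4]
  have h1 := qq_ne hq j
  have h2 := qq_ne hq u
  have h3 := qq_ne hq v
  have h4 := qq_ne hq (j+u)
  have h5 := qq_ne hq (u+v)
  have h6 := qq_ne hq (j+u+v)
  field_simp

lemma rothe (x : ℂ) (M : ℕ) :
    qPoch q x M = ∑ m ∈ range (M+1), qBinom q M m * (-1)^m * q^(tri (m-1)) * x^m := by
  induction M with
  | zero =>
    have h0 : qPoch q x 0 = 1 := by simp [qPoch]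
    have h1 : qBinom q 0 0 = 1 := qBinom_zero hq 0
    simp [h0, h1, show tri 0 = 0 from rfl]
  | succ M ih =>
    rw [qPoch_succ, ih]
    have htri0 : tri 0 = 0 := rfl
    have h1 : ∑ m ∈ range (M+1+1), qBinom q (M+1) m * (-1)^m * q^(tri (m-1)) * x^m
        = 1 + (∑ i ∈ range M, qBinom q (M+1) (i+1) * (-1)^(i+1) * q^(tri i) * x^(i+1))
          + (-1)^(M+1) * q^(tri M) * x^(M+1) := by
      rw [Finset.sum_range_succ, Finset.sum_range_succ']
      simp only [qBinom_zero hq, qBinom_self hq, Nat.add_sub_cancel, Nat.zero_sub, htri0,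
        pow_zero, mul_one, one_mul]
      ring
    have h2 : ∑ m ∈ range (M+1), qBinom q M m * (-1)^m * q^(tri (m-1)) * x^m
        = 1 + ∑ i ∈ range M, qBinom q M (i+1) * (-1)^(i+1) * q^(tri i) * x^(i+1) := by
      rw [Finset.sum_range_succ']
      simp only [qBinom_zero hq, Nat.add_sub_cancel, Nat.zero_sub, htri0,
        pow_zero, mul_one, one_mul]
      ring
    have h3 : (∑ m ∈ range (M+1), qBinom q M m * (-1)^m * q^(tri (m-1)) * x^m) * (x * q^M)
        = (∑ i ∈ range M, (qBinom q M i * (-1)^i * q^(tri (i-1)) * x^i) * (x * q^M))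
          + (-1)^M * q^(tri (M-1)) * x^M * (x * q^M) := by
      rw [Finset.sum_mul, Finset.sum_range_succ]
      simp only [qBinom_self hq, one_mul]
    have hkey : ∀ i ∈ range M,
        qBinom q (M+1) (i+1) * (-1)^(i+1) * q^(tri i) * x^(i+1)
          = qBinom q M (i+1) * (-1)^(i+1) * q^(tri i) * x^(i+1)
            - (qBinom q M i * (-1)^i * q^(tri (i-1)) * x^i) * (x * q^M) := by
      intro i hi
      rw [Finset.mem_range] at hi
      obtain ⟨s, rfl⟩ : ∃ s, M = i+1+s := ⟨M-i-1, by omega⟩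
      rw [show i+1+s+1 = (i+1+s)+1 from rfl] at *
      rw [qBinom_pascal2 hq i s, tri_pred i]
      rw [pow_add, pow_add, pow_succ]
      ring
    have htop : -( (-1)^M * q^(tri (M-1)) * x^M * (x * q^M) ) = (-1)^(M+1) * q^(tri M) * x^(M+1) := by
      rw [tri_pred M, pow_add, pow_add, pow_succ]
      ring
    rw [h1, Finset.sum_congr rfl hkey]
    rw [mul_sub, mul_one, h3, h2, Finset.sum_sub_distrib]
    linear_combination htop

end

noncomputable def cc (q a : ℂ) (N n : ℕ) : ℂ :=
  qBinom q N n * a^n * q^(tri n + tri (n-1)) * qPoch q (a*q^(n+1)) (N-n)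

noncomputable def rr (q a : ℂ) (N j n : ℕ) : ℂ :=
  (-1)^(n-j) * (qBinom q N n * qBinom q (n-1) (j-1) * a^n * q^(tri n + tri (j-1)))

section
variable {q : ℂ} (hq : ‖q‖ < 1)

lemma qPoch_zero (b : ℂ) : qPoch q b 0 = 1 := by simp [qPoch]

include hq

lemma step_term (a : ℂ) (i w v : ℕ) :
    ((-1:ℂ))^(w+1) * (qBinom q (i+w+2+v) (i+w+2) * qBinom q (i+w+1) i * a^(i+w+2)
        * q^(tri (i+w+2) + tri i))
      = (-1)^w * (qBinom q (i+w+2+v) (i+w+2) * qBinom q (i+w+1) (i+1) * a^(i+w+2)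
          * q^(tri (i+w+2) + tri (i+1)))
        + (-1)^(w+1) * (qBinom q (i+w+2+v) (i+1) * qBinom q (w+1+v) (w+1) * a^(i+w+2)
          * q^(tri (i+w+2) + tri i)) := by
  have hp := qBinom_pascal1 hq i w
  have ht := qBinom_tri hq (i+1) (w+1) v
  rw [show i+1+w = i+w+1 from by omega, show i+w+1+1 = i+w+2 from by omega] at hp
  rw [show i+1+(w+1)+v = i+w+2+v from by omega, show i+1+(w+1) = i+w+2 from by omega] at ht
  rw [show tri (i+1) = tri i + i + 1 from rfl]
  linear_combination ((-1:ℂ))^(w+1) * (a^(i+w+2) * q^(tri (i+w+2) + tri i))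
    * (qBinom q (i+w+2+v) (i+w+2) * hp + ht)

lemma claimA (a : ℂ) (N j : ℕ) (hj1 : 1 ≤ j) (hjN : j ≤ N) :
    ∑ n ∈ Finset.Ico j (N+1), cc q a N n = ∑ n ∈ Finset.Ico j (N+1), rr q a N j n := by
  suffices H : ∀ k j, 1 ≤ j → j + k = N →
      ∑ n ∈ Finset.Ico j (N+1), cc q a N n = ∑ n ∈ Finset.Ico j (N+1), rr q a N j n by
    exact H (N-j) j hj1 (by omega)
  intro k
  induction k with
  | zero =>
    intro j hj1 hjk
    obtain rfl : j = N := by omega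
    rw [Finset.sum_eq_sum_Ico_succ_bot (by omega : j < j+1),
        Finset.sum_eq_sum_Ico_succ_bot (by omega : j < j+1), Finset.Ico_self,
        Finset.sum_empty, Finset.sum_empty, add_zero, add_zero]
    unfold cc rr
    rw [Nat.sub_self, qPoch_zero, qBinom_self hq (j-1)]
    ring
  | succ k ihk =>
    intro j hj1 hjk
    have hjN : j < N := by omega
    have ih := ihk (j+1) (by omega) (by omega)
    rw [Finset.sum_eq_sum_Ico_succ_bot (by omega : j < N+1),
        Finset.sum_eq_sum_Ico_succ_bot (f := fun n => rr q a N j n) (by omega : j < N+1), ih]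
    have hsplit : ∀ n ∈ Finset.Ico (j+1) (N+1),
        rr q a N j n = rr q a N (j+1) n
          + (-1)^(n-j) * (qBinom q N j * qBinom q (N-j) (n-j) * a^n * q^(tri n + tri (j-1))) := by
      intro n hn
      rw [Finset.mem_Ico] at hn
      obtain ⟨i, rfl⟩ : ∃ i, j = i+1 := ⟨j-1, by omega⟩
      obtain ⟨w, rfl⟩ : ∃ w, n = i+w+2 := ⟨n-i-2, by omega⟩
      have hv : ∃ v, N = i+w+2+v := ⟨N-(i+w+2), by omega⟩
      obtain ⟨v, rfl⟩ := hv
      unfold rr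
      rw [show i+w+2-(i+1) = w+1 from by omega, show i+w+2-(i+1+1) = w from by omega,
          show i+w+2-1 = i+w+1 from by omega, show i+1-1 = i from by omega,
          show i+1+1-1 = i+1 from by omega, show i+w+2+v-(i+1) = w+1+v from by omega]
      exact step_term hq a i w v
    rw [Finset.sum_congr rfl hsplit, Finset.sum_add_distrib]
    -- goal : cc + (∑ rr(j+1)) = rr j j + (∑ rr(j+1) + ∑ d)
    have hc : cc q a N j = rr q a N j j
        + ∑ n ∈ Finset.Ico (j+1) (N+1),
            (-1)^(n-j) * (qBinom q N j * qBinom q (N-j) (n-j) * a^n * q^(tri n + tri (j-1))) := by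
      unfold cc rr
      rw [rothe hq (a*q^(j+1)) (N-j), Finset.sum_range_succ']
      rw [Finset.sum_Ico_eq_sum_range]
      rw [show N+1-(j+1) = N-j from by omega]
      have hterm : ∀ i ∈ Finset.range (N-j),
          ((-1:ℂ))^(j+1+i-j) * (qBinom q N j * qBinom q (N-j) (j+1+i-j) * a^(j+1+i)
              * q^(tri (j+1+i) + tri (j-1)))
            = (qBinom q N j * a^j * q^(tri j + tri (j-1)))
              * (qBinom q (N-j) (i+1) * (-1)^(i+1) * q^(tri (i+1-1)) * (a*q^(j+1))^(i+1)) := by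
        intro i hi
        rw [show j+1+i-j = i+1 from by omega, show i+1-1 = i from by omega,
            show j+1+i = i+1+j from by omega, tri_add (i+1) j,
            show tri (i+1) = tri i + i + 1 from rfl]
        ring
      rw [Finset.sum_congr rfl hterm, ← Finset.mul_sum]
      rw [Nat.sub_self, qBinom_self hq (j-1), qBinom_zero hq (N-j)]
      simp only [show (0:ℕ)-1 = 0 from rfl, show tri 0 = 0 from rfl, pow_zero]
      ring
    rw [hc]
    ring

end

theorem stmt_4 (N : ℕ) (hN : 1 ≤ N) (q a : ℂ) (hq : ‖q‖ < 1)
    (ha : ∀ k ∈ Finset.Icc 1 N, a * q ^ k ≠ 1) :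
    qPoch q (a * q) N *
        ∑ n ∈ Finset.Icc 1 N, qBinom q N n *
          ((n : ℂ) * a ^ n * q ^ (n ^ 2)) / qPoch q (a * q) n
      = ∑ n ∈ Finset.Icc 1 N, qBinom q N n *
          (qPoch q q n * (-1) ^ (n - 1) * a ^ n * q ^ (n * (n + 1) / 2)) /
          (1 - q ^ n) := by
  have hIcc : Finset.Icc 1 N = Finset.Ico 1 (N+1) := (Finset.Ico_add_one_right_eq_Icc 1 N).symm
  rw [hIcc]
  have hPa : ∀ n, n ≤ N → qPoch q (a*q) n ≠ 0 := by
    intro n hn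
    unfold qPoch
    rw [Finset.prod_ne_zero_iff]
    intro k hk
    rw [Finset.mem_range] at hk
    rw [show a*q*q^k = a*q^(k+1) from by rw [pow_succ']; ring]
    exact sub_ne_zero_of_ne (Ne.symm (ha (k+1) (Finset.mem_Icc.mpr ⟨by omega, by omega⟩)))
  have step1 : qPoch q (a*q) N *
        ∑ n ∈ Finset.Ico 1 (N+1), qBinom q N n * ((n:ℂ) * a^n * q^(n^2)) / qPoch q (a*q) n
      = ∑ n ∈ Finset.Ico 1 (N+1), (n:ℂ) * cc q a N n := by
    rw [Finset.mul_sum]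
    refine Finset.sum_congr rfl fun n hn => ?_
    rw [Finset.mem_Ico] at hn
    have h1n : 1 ≤ n := hn.1
    have hnN : n ≤ N := by omega
    have hsp : qPoch q (a*q) (n + (N-n)) = qPoch q (a*q) n * qPoch q ((a*q) * q^n) (N-n) :=
      qPoch_add (a*q) n (N-n)
    rw [show n + (N-n) = N from by omega] at hsp
    unfold cc
    rw [hsp, show a*q*q^n = a*q^(n+1) from by rw [pow_succ']; ring, ← tri_sq n h1n]
    field_simp [hPa n hnN]
  rw [step1]
  have step2 : ∀ n ∈ Finset.Ico 1 (N+1), (n:ℂ) * cc q a N n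
      = ∑ _j ∈ Finset.Ico 1 (n+1), cc q a N n := by
    intro n hn
    rw [Finset.sum_const, Nat.card_Ico, Nat.add_sub_cancel, nsmul_eq_mul]
  rw [Finset.sum_congr rfl step2, ← Finset.sum_Ico_Ico_comm]
  have step4 : ∀ j ∈ Finset.Ico 1 (N+1),
      ∑ n ∈ Finset.Ico j (N+1), cc q a N n = ∑ n ∈ Finset.Ico j (N+1), rr q a N j n := by
    intro j hj; rw [Finset.mem_Ico] at hj; exact claimA hq a N j hj.1 (by omega)
  rw [Finset.sum_congr rfl step4, Finset.sum_Ico_Ico_comm]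
  refine Finset.sum_congr rfl fun n hn => ?_
  rw [Finset.mem_Ico] at hn
  have h1n : 1 ≤ n := hn.1
  have hnN : n ≤ N := by omega
  have hPn : qPoch q q n = qPoch q q (n-1) * (1 - q^n) := by
    have h := qPoch_succ (q := q) q (n-1)
    rw [show (n-1)+1 = n from by omega] at h
    rw [h, show q*q^(n-1) = q^n from by rw [← pow_succ']; congr 1; omega]
  have hrothe := rothe hq q (n-1)
  rw [show (n-1)+1 = n from by omega] at hrothe
  rw [Finset.sum_Ico_eq_sum_range, show n+1-1 = n from by omega]
  have hterm : ∀ i ∈ Finset.range n, rr q a N (1+i) n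
      = ((-1:ℂ))^(n-1) * (qBinom q N n * a^n * q^(tri n))
        * (qBinom q (n-1) i * (-1)^i * q^(tri (i-1)) * q^i) := by
    intro i hi
    rw [Finset.mem_range] at hi
    unfold rr
    rw [show (1+i)-1 = i from by omega, tri_pred i]
    have hsgn : ((-1:ℂ))^(n-(1+i)) = (-1)^(n-1) * (-1)^i := by
      have h1 : ((-1:ℂ))^(n-(1+i)) * (-1)^i = (-1)^(n-1) := by
        rw [← pow_add]; congr 1; omega
      have h2 : ((-1:ℂ))^i * (-1)^i = 1 := by rw [← mul_pow]; norm_num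
      calc ((-1:ℂ))^(n-(1+i)) = ((-1:ℂ))^(n-(1+i)) * (((-1:ℂ))^i * (-1)^i) := by
            rw [h2, mul_one]
        _ = (-1)^(n-1) * (-1)^i := by rw [← mul_assoc, h1]
    rw [hsgn, pow_add]
    ring
  rw [Finset.sum_congr rfl hterm, ← Finset.mul_sum, ← hrothe]
  rw [hPn, show n*(n+1)/2 = tri n from (tri_eq n).symm]
  field_simp [one_sub_qpow_ne hq n h1n]
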